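/- Cakmak–Tiryaki variant of the Riedel–Sahoo theorem: Let a < b and let f : ℝ → ℝ be differentiable at every point of the closed interval [a, b]. Then there exists ξ ∈ (a, b) such that f(b) - f(ξ) = (b - ξ) * f'(ξ) + (1/2) * ((f'(b) - f'(a))/(b - a)) * (b - ξ)^2. -/

import Mathlib

open Set Filter Topology

/-- Flett-type mean value theorem at the right endpoint: if `g` is differentiable on `[a,b]`
with `g' a = g' b`, then there is `ξ ∈ (a,b)` with `g b - g ξ = (b - ξ) * g' ξ`. -/
lemma flett_right (g g' : ℝ → ℝ) (a b : ℝ) (hab : a < b)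
    (hg : ∀ x ∈ Set.Icc a b, HasDerivWithinAt g (g' x) (Set.Icc a b) x)
    (heq : g' a = g' b) :
    ∃ ξ ∈ Set.Ioo a b, g b - g ξ = (b - ξ) * g' ξ := by
  have hba : (0:ℝ) < b - a := sub_pos.2 hab
  set h : ℝ → ℝ := fun x => (g b - g x) / (b - x) with hh
  set H : ℝ → ℝ := fun x => ((0 - g' x) * (b - x) - (g b - g x) * (0 - 1)) / (b - x) ^ 2 with hH
  have gc : ContinuousOn g (Icc a b) := fun x hx => (hg x hx).continuousWithinAt
  -- continuity of h on [a, b)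
  have hcont : ContinuousOn h (Ico a b) := by
    apply ContinuousOn.div
    · exact continuousOn_const.sub (gc.mono Ico_subset_Icc_self)
    · exact continuousOn_const.sub continuousOn_id
    · intro x hx
      exact sub_ne_zero.2 (ne_of_gt hx.2)
  -- derivative of h on (a, b)
  have hderiv : ∀ x ∈ Ioo a b, HasDerivAt h (H x) x := by
    intro x hx
    have hga : HasDerivAt g (g' x) x :=
      (hg x (Ioo_subset_Icc_self hx)).hasDerivAt (Icc_mem_nhds hx.1 hx.2)
    exact ((hasDerivAt_const x (g b)).sub hga).div
      ((hasDerivAt_const x b).sub (hasDerivAt_id x)) (sub_ne_zero.2 hx.2.ne')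
  -- h tends to g' b at b from the left (along Ioo a b)
  haveI : (𝓝[Ioo a b] b).NeBot := by
    refine mem_closure_iff_nhdsWithin_neBot.mp ?_
    rw [closure_Ioo hab.ne]
    exact right_mem_Icc.2 hab.le
  haveI : (𝓝[Ioo a b] a).NeBot := by
    refine mem_closure_iff_nhdsWithin_neBot.mp ?_
    rw [closure_Ioo hab.ne]
    exact left_mem_Icc.2 hab.le
  have hlim : Tendsto h (𝓝[Ioo a b] b) (𝓝 (g' b)) := by
    have h1 := hasDerivWithinAt_iff_tendsto_slope.mp (hg b (right_mem_Icc.2 hab.le))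
    have h2 : Tendsto (slope g b) (𝓝[Ioo a b] b) (𝓝 (g' b)) :=
      h1.mono_left (nhdsWithin_mono b (fun x hx => ⟨Ioo_subset_Icc_self hx, hx.2.ne⟩))
    refine h2.congr' ?_
    filter_upwards [self_mem_nhdsWithin] with x hx
    rw [slope_def_field, hh]
    simp only
    rw [div_eq_div_iff (sub_ne_zero.2 hx.2.ne) (sub_ne_zero.2 hx.2.ne')]
    ring
  -- a point of (a,b) beyond m where h is below (resp. above) a given value c
  have near_b_lt : ∀ m c : ℝ, m < b → g' b < c → ∃ x3 ∈ Ioo a b, m < x3 ∧ h x3 < c := by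
    intro m c hmb hc
    have e1 : ∀ᶠ x in 𝓝[Ioo a b] b, h x < c :=
      hlim.eventually (tendsto_id.eventually_lt_const hc)
    have e2 : ∀ᶠ x in 𝓝[Ioo a b] b, m < x :=
      eventually_nhdsWithin_of_eventually_nhds (eventually_gt_nhds hmb)
    obtain ⟨x, hx1, hx2, hx3⟩ := (e1.and (e2.and self_mem_nhdsWithin)).exists
    exact ⟨x, hx3, hx2, hx1⟩
  have near_b_gt : ∀ m c : ℝ, m < b → c < g' b → ∃ x3 ∈ Ioo a b, m < x3 ∧ c < h x3 := by
    intro m c hmb hc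
    have e1 : ∀ᶠ x in 𝓝[Ioo a b] b, c < h x :=
      hlim.eventually (tendsto_id.eventually_const_lt hc)
    have e2 : ∀ᶠ x in 𝓝[Ioo a b] b, m < x :=
      eventually_nhdsWithin_of_eventually_nhds (eventually_gt_nhds hmb)
    obtain ⟨x, hx1, hx2, hx3⟩ := (e1.and (e2.and self_mem_nhdsWithin)).exists
    exact ⟨x, hx3, hx2, hx1⟩
  -- helper: if h exceeds h a somewhere and the limit at b is ≤ h a, two equal values
  have helperA : ∀ m ∈ Ioo a b, h a < h m → g' b ≤ h a →
      ∃ p q, a ≤ p ∧ p < q ∧ q < b ∧ h p = h q := by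
    intro m hm hma hMa
    obtain ⟨x3, hx3I, hmx3, hx3lt⟩ := near_b_lt m (h m) hm.2 (lt_of_le_of_lt hMa hma)
    set v : ℝ := (max (h a) (h x3) + h m) / 2 with hv
    have hmax : max (h a) (h x3) < h m := max_lt hma hx3lt
    have hv1 : max (h a) (h x3) < v := by rw [hv]; linarith
    have hv2 : v < h m := by rw [hv]; linarith
    have hva : h a < v := lt_of_le_of_lt (le_max_left _ _) hv1
    have hvx3 : h x3 < v := lt_of_le_of_lt (le_max_right _ _) hv1
    -- IVT on [a, m]
    obtain ⟨p, hpI, hpv⟩ : ∃ p ∈ Icc a m, h p = v := by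
      have := intermediate_value_Icc hm.1.le
        (hcont.mono (fun x hx => ⟨hx.1, lt_of_le_of_lt hx.2 hm.2⟩))
      exact this ⟨hva.le, hv2.le⟩
    -- IVT on [m, x3]
    obtain ⟨q, hqI, hqv⟩ : ∃ q ∈ Icc m x3, h q = v := by
      have := intermediate_value_Icc' hmx3.le
        (hcont.mono (fun x hx => ⟨hm.1.le.trans hx.1, lt_of_le_of_lt hx.2 hx3I.2⟩))
      exact this ⟨hvx3.le, hv2.le⟩
    have hpm : p < m := lt_of_le_of_ne hpI.2 (fun he => by rw [he] at hpv; exact hv2.ne hpv.symm)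
    have hmq : m < q := lt_of_le_of_ne hqI.1 (fun he => by rw [← he] at hqv; exact hv2.ne hqv.symm)
    exact ⟨p, q, hpI.1, hpm.trans hmq, lt_of_le_of_lt hqI.2 hx3I.2, hpv.trans hqv.symm⟩
  have helperB : ∀ m ∈ Ioo a b, h m < h a → h a ≤ g' b →
      ∃ p q, a ≤ p ∧ p < q ∧ q < b ∧ h p = h q := by
    intro m hm hma hMa
    obtain ⟨x3, hx3I, hmx3, hx3gt⟩ := near_b_gt m (h m) hm.2 (lt_of_lt_of_le hma hMa)
    set v : ℝ := (min (h a) (h x3) + h m) / 2 with hv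
    have hmin : h m < min (h a) (h x3) := lt_min hma hx3gt
    have hv1 : v < min (h a) (h x3) := by rw [hv]; linarith
    have hv2 : h m < v := by rw [hv]; linarith
    have hva : v < h a := lt_of_lt_of_le hv1 (min_le_left _ _)
    have hvx3 : v < h x3 := lt_of_lt_of_le hv1 (min_le_right _ _)
    obtain ⟨p, hpI, hpv⟩ : ∃ p ∈ Icc a m, h p = v := by
      have := intermediate_value_Icc' hm.1.le
        (hcont.mono (fun x hx => ⟨hx.1, lt_of_le_of_lt hx.2 hm.2⟩))
      exact this ⟨hv2.le, hva.le⟩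
    obtain ⟨q, hqI, hqv⟩ : ∃ q ∈ Icc m x3, h q = v := by
      have := intermediate_value_Icc hmx3.le
        (hcont.mono (fun x hx => ⟨hm.1.le.trans hx.1, lt_of_le_of_lt hx.2 hx3I.2⟩))
      exact this ⟨hv2.le, hvx3.le⟩
    have hpm : p < m := lt_of_le_of_ne hpI.2 (fun he => by rw [he] at hpv; exact hv2.ne hpv)
    have hmq : m < q := lt_of_le_of_ne hqI.1 (fun he => by rw [← he] at hqv; exact hv2.ne hqv)
    exact ⟨p, q, hpI.1, hpm.trans hmq, lt_of_le_of_lt hqI.2 hx3I.2, hpv.trans hqv.symm⟩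
  -- derivative of h at a (within the interval)
  have hDa : HasDerivWithinAt h
      (((0 - g' a) * (b - a) - (g b - g a) * (0 - 1)) / (b - a) ^ 2) (Icc a b) a := by
    exact ((hasDerivWithinAt_const a (Icc a b) (g b)).sub (hg a (left_mem_Icc.2 hab.le))).div
      ((hasDerivWithinAt_const a (Icc a b) b).sub (hasDerivWithinAt_id a (Icc a b)))
      (sub_ne_zero.2 hab.ne')
  have hslopea : Tendsto (slope h a) (𝓝[Ioo a b] a)
      (𝓝 (((0 - g' a) * (b - a) - (g b - g a) * (0 - 1)) / (b - a) ^ 2)) := by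
    have h1 := hasDerivWithinAt_iff_tendsto_slope.mp hDa
    exact h1.mono_left (nhdsWithin_mono a (fun x hx => ⟨Ioo_subset_Icc_self hx, hx.1.ne'⟩))
  have key : ∃ p q, a ≤ p ∧ p < q ∧ q < b ∧ h p = h q := by
    have hha : h a = (g b - g a) / (b - a) := rfl
    rcases lt_trichotomy (h a) (g' b) with hc | hc | hc
    · -- h a < g' b : derivative of h at a is negative, get m with h m < h a
      have hnum : (0 - g' a) * (b - a) - (g b - g a) * (0 - 1) < 0 := by
        have : (g b - g a) / (b - a) < g' a := by rw [← hha, heq]; exact hc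
        have := (div_lt_iff₀ hba).mp this
        nlinarith
      have hDneg : ((0 - g' a) * (b - a) - (g b - g a) * (0 - 1)) / (b - a) ^ 2 < 0 :=
        div_neg_of_neg_of_pos hnum (by positivity)
      have e1 : ∀ᶠ x in 𝓝[Ioo a b] a, slope h a x < 0 :=
        hslopea.eventually (tendsto_id.eventually_lt_const hDneg)
      obtain ⟨m, hs, hmI⟩ := (e1.and self_mem_nhdsWithin).exists
      have hmlt : h m < h a := by
        rw [slope_def_field] at hs
        have hma : 0 < m - a := sub_pos.2 hmI.1
        rcases div_neg_iff.mp hs with ⟨h1, h2⟩ | ⟨h1, h2⟩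
        · linarith
        · linarith
      exact helperB m hmI hmlt hc.le
    · -- h a = g' b : either h is constant or use a helper
      by_cases hex : ∃ m ∈ Ioo a b, h m ≠ h a
      · obtain ⟨m, hmI, hmne⟩ := hex
        rcases lt_or_gt_of_ne hmne with hlt | hgt
        · exact helperB m hmI hlt hc.le
        · exact helperA m hmI hgt hc.ge
      · push_neg at hex
        refine ⟨a, (a + b) / 2, le_refl a, by linarith, by linarith, ?_⟩
        exact (hex ((a + b) / 2) ⟨by linarith, by linarith⟩).symm
    · -- g' b < h a : derivative of h at a is positive, get m with h m > h a
      have hnum : 0 < (0 - g' a) * (b - a) - (g b - g a) * (0 - 1) := by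
        have : g' a < (g b - g a) / (b - a) := by rw [← hha, heq]; exact hc
        have := (lt_div_iff₀ hba).mp this
        nlinarith
      have hDpos : 0 < ((0 - g' a) * (b - a) - (g b - g a) * (0 - 1)) / (b - a) ^ 2 :=
        div_pos hnum (by positivity)
      have e1 : ∀ᶠ x in 𝓝[Ioo a b] a, 0 < slope h a x :=
        hslopea.eventually (tendsto_id.eventually_const_lt hDpos)
      obtain ⟨m, hs, hmI⟩ := (e1.and self_mem_nhdsWithin).exists
      have hmgt : h a < h m := by
        rw [slope_def_field] at hs
        have hma : 0 < m - a := sub_pos.2 hmI.1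
        rcases div_pos_iff.mp hs with ⟨h1, h2⟩ | ⟨h1, h2⟩
        · linarith
        · linarith
      exact helperA m hmI hmgt hc.le
  -- Rolle on [p, q]
  obtain ⟨p, q, hap, hpq, hqb, hval⟩ := key
  obtain ⟨ξ, hξI, hξ0⟩ := exists_hasDerivAt_eq_zero hpq
    (hcont.mono (fun x hx => ⟨hap.trans hx.1, lt_of_le_of_lt hx.2 hqb⟩)) hval
    (fun x hx => hderiv x ⟨lt_of_le_of_lt hap hx.1, hx.2.trans hqb⟩)
  have hξab : ξ ∈ Ioo a b := ⟨lt_of_le_of_lt hap hξI.1, hξI.2.trans hqb⟩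
  refine ⟨ξ, hξab, ?_⟩
  rw [hH] at hξ0
  simp only at hξ0
  have hbξ : (b - ξ) ^ 2 ≠ 0 := pow_ne_zero 2 (sub_ne_zero.2 hξab.2.ne')
  rcases div_eq_zero_iff.mp hξ0 with h0 | h0
  · nlinarith [h0]
  · exact absurd h0 hbξ

/-- Cakmak–Tiryaki variant of the Riedel–Sahoo theorem. -/
theorem cakmak_tiryaki (f f' : ℝ → ℝ) (a b : ℝ) (hab : a < b)
    (hf : ∀ x ∈ Set.Icc a b, HasDerivWithinAt f (f' x) (Set.Icc a b) x) :
    ∃ ξ ∈ Set.Ioo a b,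
      f b - f ξ = (b - ξ) * f' ξ + (1 / 2) * ((f' b - f' a) / (b - a)) * (b - ξ) ^ 2 := by
  have hba : (0:ℝ) < b - a := sub_pos.2 hab
  set K : ℝ := (f' b - f' a) / (b - a) with hK
  have hg : ∀ x ∈ Set.Icc a b,
      HasDerivWithinAt (fun y => f y - K / 2 * y ^ 2) (f' x - K * x) (Set.Icc a b) x := by
    intro x hx
    have h1 : HasDerivAt (fun y => K / 2 * y ^ 2) (K * x) x := by
      have := (hasDerivAt_pow 2 x).const_mul (K / 2)
      exact this.congr_deriv (by ring)
    exact (hf x hx).sub h1.hasDerivWithinAt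
  have heq : (fun x => f' x - K * x) a = (fun x => f' x - K * x) b := by
    simp only
    rw [hK]
    field_simp
    ring
  obtain ⟨ξ, hξI, hξ⟩ := flett_right (fun y => f y - K / 2 * y ^ 2) (fun x => f' x - K * x)
    a b hab hg heq
  refine ⟨ξ, hξI, ?_⟩
  linear_combination hξ
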